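/- Suppose ū ∈ 𝕌 satisfies: (i) the variational inequality: for every u ∈ 𝕌 and every i ∈ {1, ..., N}, ∫₀ᵀ (λ_i ū_i − p_i)(u_i − ū_i) dt ≥ 0; and (ii) the second-order condition: J''(ū)[h, h] > 0 for every critical direction h ∈ C_ū with h ≠ 0. Then J satisfies a quadratic growth condition at ū: there exist δ > 0 and ε > 0 such that J(u) ≥ J(ū) + (ε/2) ‖u − ū‖²_{L²([0,T];ℝ^N)} for all u ∈ 𝕌 with ‖u − ū‖_{L²([0,T];ℝ^N)} < δ. In particular, ū is a strict local minimizer of J on 𝕌. -/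

import Mathlib

open MeasureTheory Filter Topology

noncomputable section

/-- The underlying measure of `L²([0,T])`: Lebesgue measure restricted to `[0,T]`. -/
abbrev ctrlMeasure (T : ℝ) : Measure ℝ := volume.restrict (Set.Icc 0 T)

/-- The control space `L²([0,T]; ℝ^N)`. -/
abbrev CtrlSpace (T : ℝ) (N : ℕ) := Lp (EuclideanSpace ℝ (Fin N)) 2 (ctrlMeasure T)

/-- The set of admissible controls
`𝕌 = {u ∈ L²([0,T];ℝ^N) : a_i ≤ u_i ≤ b_i a.e. on [0,T] for every i}`. -/
def admissibleSet {T : ℝ} {N : ℕ} (a b : CtrlSpace T N) : Set (CtrlSpace T N) :=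
  {u | ∀ i : Fin N, ∀ᵐ t ∂(ctrlMeasure T), a t i ≤ u t i ∧ u t i ≤ b t i}

/-- The cone of critical directions `C_ū`: all `h ∈ L²([0,T];ℝ^N)` such that for every `i`
and a.e. `t ∈ [0,T]`: `h_i(t) ≥ 0` if `ū_i(t) = a_i(t)`, `h_i(t) ≤ 0` if `ū_i(t) = b_i(t)`,
and `h_i(t) = 0` if `λ_i ū_i(t) − p_i(t) ≠ 0`. -/
def criticalCone {T : ℝ} {N : ℕ} (a b ubar p : CtrlSpace T N) (lam : Fin N → ℝ) :
    Set (CtrlSpace T N) :=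
  {h | ∀ i : Fin N, ∀ᵐ t ∂(ctrlMeasure T),
      (ubar t i = a t i → 0 ≤ h t i) ∧ (ubar t i = b t i → h t i ≤ 0) ∧
      (lam i * ubar t i - p t i ≠ 0 → h t i = 0)}


/-! ### Auxiliary lemmas -/

section Aux

open Set

instance ctrlSecondCountable (T : ℝ) (N : ℕ) : SecondCountableTopology (CtrlSpace T N) :=
  haveI : Fact ((2:ENNReal) ≠ ⊤) := ⟨by norm_num⟩
  MeasureTheory.Lp.SecondCountableTopology

/-- Weak sequential compactness of bounded sequences in a separable real Hilbert space. -/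
theorem weak_seq_compact {H : Type*} [NormedAddCommGroup H] [InnerProductSpace ℝ H]
    [CompleteSpace H] [TopologicalSpace.SeparableSpace H]
    (h : ℕ → H) (R : ℝ) (hbd : ∀ k, ‖h k‖ ≤ R) :
    ∃ φ : ℕ → ℕ, StrictMono φ ∧ ∃ h₀ : H,
      ∀ w : H, Tendsto (fun k => (inner ℝ (h (φ k)) w : ℝ)) atTop (𝓝 (inner ℝ h₀ w)) := by
  haveI : Nonempty H := ⟨0⟩
  have hR : 0 ≤ R := le_trans (norm_nonneg _) (hbd 0)
  set w : ℕ → H := TopologicalSpace.denseSeq H with hw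
  have hdense : DenseRange w := TopologicalSpace.denseRange_denseSeq H
  set x : ℕ → ℕ → ℝ := fun k m => inner ℝ (h k) (w m) with hx
  have hxmem : ∀ k, x k ∈ Set.univ.pi (fun m => Set.Icc (-(R*‖w m‖)) (R*‖w m‖)) := by
    intro k
    rw [Set.mem_univ_pi]
    intro m
    rw [Set.mem_Icc, ← abs_le]
    calc |x k m| ≤ ‖h k‖ * ‖w m‖ := abs_real_inner_le_norm _ _
      _ ≤ R * ‖w m‖ := by gcongr; exact hbd k
  obtain ⟨f, -, φ, hφ, hconv⟩ :=
    (isCompact_univ_pi (fun m => isCompact_Icc)).isSeqCompact hxmem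
  have hpt : ∀ m, Tendsto (fun k => x (φ k) m) atTop (𝓝 (f m)) := by
    intro m
    exact (tendsto_pi_nhds.1 hconv) m
  have hcauchy : ∀ v : H, CauchySeq (fun k => (inner ℝ (h (φ k)) v : ℝ)) := by
    intro v
    rw [Metric.cauchySeq_iff]
    intro ε hε
    obtain ⟨m, hm⟩ := hdense.exists_dist_lt v (show 0 < ε/(4*(R+1)) by positivity)
    have hc := (hpt m).cauchySeq
    rw [Metric.cauchySeq_iff] at hc
    obtain ⟨NN, hNN⟩ := hc (ε/2) (by positivity)
    refine ⟨NN, fun j hj k hk => ?_⟩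
    have key : ∀ l : ℕ, |(inner ℝ (h (φ l)) v : ℝ) - inner ℝ (h (φ l)) (w m)| ≤ ε/4 := by
      intro l
      rw [← inner_sub_right]
      calc |(inner ℝ (h (φ l)) (v - w m) : ℝ)| ≤ ‖h (φ l)‖ * ‖v - w m‖ :=
            abs_real_inner_le_norm _ _
        _ ≤ (R+1) * (ε/(4*(R+1))) := by
            apply mul_le_mul (le_trans (hbd _) (by linarith)) ?_ (norm_nonneg _) (by positivity)
            rw [← dist_eq_norm]
            exact le_of_lt hm
        _ = ε/4 := by field_simp
    have h1 := hNN j hj k hk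
    rw [Real.dist_eq] at h1 ⊢
    have k1 := key j
    have k2 := key k
    have t1 : |(inner ℝ (h (φ j)) v : ℝ) - inner ℝ (h (φ k)) v|
        ≤ |(inner ℝ (h (φ j)) v : ℝ) - inner ℝ (h (φ j)) (w m)|
          + |(inner ℝ (h (φ j)) (w m) : ℝ) - inner ℝ (h (φ k)) v| := abs_sub_le _ _ _
    have t2 : |(inner ℝ (h (φ j)) (w m) : ℝ) - inner ℝ (h (φ k)) v|
        ≤ |(inner ℝ (h (φ j)) (w m) : ℝ) - inner ℝ (h (φ k)) (w m)|
          + |(inner ℝ (h (φ k)) (w m) : ℝ) - inner ℝ (h (φ k)) v| := abs_sub_le _ _ _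
    have t3 : |(inner ℝ (h (φ k)) (w m) : ℝ) - inner ℝ (h (φ k)) v|
        = |(inner ℝ (h (φ k)) v : ℝ) - inner ℝ (h (φ k)) (w m)| := abs_sub_comm _ _
    have hxj : |(inner ℝ (h (φ j)) (w m) : ℝ) - inner ℝ (h (φ k)) (w m)| < ε/2 := h1
    linarith
  have hlim : ∀ v : H, ∃ c : ℝ, Tendsto (fun k => (inner ℝ (h (φ k)) v : ℝ)) atTop (𝓝 c) :=
    fun v => cauchySeq_tendsto_of_complete (hcauchy v)
  choose L hL using hlim
  have hmap_add : ∀ v v', L (v + v') = L v + L v' := by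
    intro v v'
    refine tendsto_nhds_unique ?_ ((hL v).add (hL v'))
    simpa only [inner_add_right] using hL (v + v')
  have hmap_smul : ∀ (c : ℝ) v, L (c • v) = c * L v := by
    intro c v
    refine tendsto_nhds_unique ?_ ((hL v).const_mul c)
    simpa only [inner_smul_right] using hL (c • v)
  have hbound : ∀ v, |L v| ≤ R * ‖v‖ := by
    intro v
    refine le_of_tendsto (hL v).abs (Filter.Eventually.of_forall fun k => ?_)
    calc |(inner ℝ (h (φ k)) v : ℝ)| ≤ ‖h (φ k)‖ * ‖v‖ := abs_real_inner_le_norm _ _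
      _ ≤ R * ‖v‖ := by gcongr; exact hbd _
  set L' : H →L[ℝ] ℝ := LinearMap.mkContinuous
    { toFun := L, map_add' := hmap_add, map_smul' := hmap_smul } R
    (fun v => by rw [Real.norm_eq_abs]; exact hbound v) with hL'
  refine ⟨φ, hφ, (InnerProductSpace.toDual ℝ H).symm L', fun v => ?_⟩
  rw [InnerProductSpace.toDual_symm_apply]
  exact hL v

/-- Second-order Taylor estimate with explicit bound on the variation of `J''`. -/
theorem taylor_est {H : Type*} [NormedAddCommGroup H] [NormedSpace ℝ H]
    (J : H → ℝ) (J' : H → (H →L[ℝ] ℝ)) (J'' : H → (H →L[ℝ] H →L[ℝ] ℝ))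
    (O : Set H) (hJ' : ∀ u ∈ O, HasFDerivAt J (J' u) u)
    (hJ'' : ∀ u ∈ O, HasFDerivAt J' (J'' u) u)
    (u v : H) (hseg : ∀ s ∈ Set.Icc (0:ℝ) 1, u + s • (v - u) ∈ O)
    (K : ℝ) (hK : ∀ s ∈ Set.Icc (0:ℝ) 1, ‖J'' (u + s • (v - u)) - J'' u‖ ≤ K) :
    |J v - J u - J' u (v - u) - (1/2) * J'' u (v - u) (v - u)| ≤ K * ‖v - u‖^2 := by
  set d := v - u with hd
  set c : ℝ → H := fun s => u + s • d with hc
  have hcderiv : ∀ s : ℝ, HasDerivAt c d s := by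
    intro s
    exact (((hasDerivAt_id s).smul_const d).const_add u).congr_deriv (one_smul _ _)
  have hKnn : 0 ≤ K :=
    le_trans (norm_nonneg (J'' (u + (0:ℝ) • d) - J'' u)) (hK 0 ⟨le_refl 0, zero_le_one⟩)
  have hq : ∀ s ∈ Set.Icc (0:ℝ) 1,
      HasDerivAt (fun s => J' (c s) d) (J'' (c s) d d) s := by
    intro s hs
    have h1 : HasDerivAt (fun s => J' (c s)) (J'' (c s) d) s :=
      (hJ'' (c s) (hseg s hs)).comp_hasDerivAt s (hcderiv s)
    exact (ContinuousLinearMap.apply ℝ ℝ d).hasFDerivAt.comp_hasDerivAt s h1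
  have hq2 : ∀ s ∈ Set.Icc (0:ℝ) 1,
      ‖J' (c s) d - J' u d - s * J'' u d d‖ ≤ K * ‖d‖^2 * s := by
    intro s hs
    have := norm_image_sub_le_of_norm_deriv_le_segment'
      (f := fun s => J' (c s) d - s * J'' u d d)
      (f' := fun s => J'' (c s) d d - J'' u d d)
      (fun t ht => (((hq t ht).sub ((hasDerivAt_id t).mul_const (J'' u d d) |>.congr_deriv
          (by ring))).hasDerivWithinAt))
      (C := K * ‖d‖^2) ?_ s hs
    · rw [show J' (c s) d - J' u d - s * J'' u d d
          = J' (c s) d - s * J'' u d d - J' u d from by ring]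
      simpa [hc] using this
    · intro t ht'
      have ht := Set.Ico_subset_Icc_self ht'
      have : ‖(J'' (c t) - J'' u) d d‖ ≤ ‖J'' (c t) - J'' u‖ * ‖d‖ * ‖d‖ :=
        le_trans (ContinuousLinearMap.le_opNorm _ _)
          (by
            gcongr
            exact ContinuousLinearMap.le_opNorm _ _)
      simp only [ContinuousLinearMap.sub_apply, ContinuousLinearMap.coe_sub', Pi.sub_apply] at this
      calc ‖J'' (c t) d d - J'' u d d‖ ≤ ‖J'' (c t) - J'' u‖ * ‖d‖ * ‖d‖ := this
        _ ≤ K * ‖d‖^2 := by rw [pow_two, ← mul_assoc]; gcongr; exact hK t ht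
  have hg : ∀ s ∈ Set.Icc (0:ℝ) 1,
      HasDerivAt (fun s => J (c s) - s * J' u d - s^2/2 * J'' u d d)
        (J' (c s) d - J' u d - s * J'' u d d) s := by
    intro s hs
    have h1 : HasDerivAt (fun s => J (c s)) (J' (c s) d) s :=
      (hJ' (c s) (hseg s hs)).comp_hasDerivAt s (hcderiv s)
    have h2 : HasDerivAt (fun s : ℝ => s * J' u d) (J' u d) s := by
      simpa using (hasDerivAt_id s).mul_const (J' u d)
    have h3 : HasDerivAt (fun s : ℝ => s^2/2 * J'' u d d) (s * J'' u d d) s := by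
      have := ((hasDerivAt_pow 2 s).div_const 2).mul_const (J'' u d d)
      simpa using this.congr_deriv (by push_cast; ring)
    exact (h1.sub h2).sub h3
  have hfinal := norm_image_sub_le_of_norm_deriv_le_segment'
    (f := fun s => J (c s) - s * J' u d - s^2/2 * J'' u d d)
    (f' := fun s => J' (c s) d - J' u d - s * J'' u d d)
    (fun t ht => (hg t ht).hasDerivWithinAt)
    (C := K * ‖d‖^2)
    (fun t ht => le_trans (hq2 t (Set.Ico_subset_Icc_self ht))
      (mul_le_of_le_one_right (by positivity) ht.2.le))
    1 ⟨zero_le_one, le_refl 1⟩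
  have hc1 : c 1 = v := by simp [hc, hd]
  have hc0 : c 0 = u := by simp [hc]
  have hval : (fun s : ℝ => J (c s) - s * J' u d - s^2/2 * J'' u d d) 1 -
      (fun s : ℝ => J (c s) - s * J' u d - s^2/2 * J'' u d d) 0
      = J v - J u - J' u d - 1/2 * J'' u d d := by
    show J (c 1) - 1 * J' u d - 1^2/2 * J'' u d d
        - (J (c 0) - 0 * J' u d - 0^2/2 * J'' u d d) = _
    rw [hc1, hc0]
    ring
  rw [hval, Real.norm_eq_abs] at hfinal
  simpa using hfinal

theorem comp_sm {α : Type*} [MeasurableSpace α] {μ : Measure α} {N : ℕ}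
    (g : Lp (EuclideanSpace ℝ (Fin N)) 2 μ) (i : Fin N) :
    StronglyMeasurable (fun t => g t i) :=
  (EuclideanSpace.proj (𝕜 := ℝ) i).continuous.comp_stronglyMeasurable (Lp.stronglyMeasurable g)

theorem coord_abs_le {N : ℕ} (x : EuclideanSpace ℝ (Fin N)) (i : Fin N) : |x i| ≤ ‖x‖ := by
  rw [EuclideanSpace.norm_eq, ← Real.sqrt_sq_eq_abs]
  apply Real.sqrt_le_sqrt
  exact Finset.single_le_sum (f := fun j => ‖x j‖^2) (fun j _ => sq_nonneg _) (Finset.mem_univ i)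
    |>.trans_eq' (by rw [Real.norm_eq_abs, sq_abs])

theorem comp_mem {α : Type*} [MeasurableSpace α] {μ : Measure α} {N : ℕ}
    (g : Lp (EuclideanSpace ℝ (Fin N)) 2 μ) (i : Fin N) :
    MemLp (fun t => g t i) 2 μ := by
  refine MemLp.of_le (Lp.memLp g) (comp_sm g i).aestronglyMeasurable
    (Filter.Eventually.of_forall fun t => ?_)
  rw [Real.norm_eq_abs]
  exact coord_abs_le (g t) i

theorem comp_integrable {α : Type*} [MeasurableSpace α] {μ : Measure α} [IsFiniteMeasure μ] {N : ℕ}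
    (g : Lp (EuclideanSpace ℝ (Fin N)) 2 μ) (i : Fin N) :
    Integrable (fun t => g t i) μ :=
  memLp_one_iff_integrable.1 ((comp_mem g i).mono_exponent (by norm_num))

theorem mem_mul_integrable {α : Type*} [MeasurableSpace α] {μ : Measure α}
    {f g : α → ℝ} (hf : MemLp f 2 μ) (hg : MemLp g 2 μ) :
    Integrable (fun t => f t * g t) μ := by
  rw [← memLp_one_iff_integrable]
  have := hg.smul (φ := f) hf (p := 2) (q := 2) (r := 1)
  exact this

theorem comp_int_mul {α : Type*} [MeasurableSpace α] {μ : Measure α} {N : ℕ}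
    (g g' : Lp (EuclideanSpace ℝ (Fin N)) 2 μ) (i : Fin N) :
    Integrable (fun t => g t i * g' t i) μ :=
  mem_mul_integrable (comp_mem g i) (comp_mem g' i)

theorem inner_ind {α : Type*} [MeasurableSpace α] {μ : Measure α} {N : ℕ}
    (g : Lp (EuclideanSpace ℝ (Fin N)) 2 μ) (i : Fin N) {B : Set α}
    (hB : MeasurableSet B) (hμB : μ B ≠ ⊤) :
    (inner ℝ g (indicatorConstLp 2 hB hμB (EuclideanSpace.single i (1:ℝ))) : ℝ)
      = ∫ t in B, g t i ∂μ := by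
  rw [real_inner_comm, L2.inner_indicatorConstLp_eq_setIntegral_inner]
  congr 1
  ext t
  simp [EuclideanSpace.inner_single_left]

theorem norm_sq_sum {α : Type*} [MeasurableSpace α] {μ : Measure α} {N : ℕ}
    (g : Lp (EuclideanSpace ℝ (Fin N)) 2 μ) :
    ‖g‖^2 = ∑ i, ∫ t, g t i * g t i ∂μ := by
  have h1 : ∫ t, (inner ℝ (g t) (g t) : ℝ) ∂μ = ∑ i, ∫ t, g t i * g t i ∂μ := by
    rw [show (fun t => (inner ℝ (g t) (g t) : ℝ)) = fun t => ∑ i, g t i * g t i from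
      funext fun t => by rw [real_inner_self_eq_norm_sq, EuclideanSpace.norm_sq_eq]; congr 1; ext i; rw [Real.norm_eq_abs, sq_abs, sq]]
    exact integral_finset_sum _ (fun i _ => comp_int_mul g g i)
  rw [← real_inner_self_eq_norm_sq, L2.inner_def, h1]

def diagCLM {N : ℕ} (lam : Fin N → ℝ) :
    EuclideanSpace ℝ (Fin N) →L[ℝ] EuclideanSpace ℝ (Fin N) :=
  ∑ i : Fin N, lam i • ((EuclideanSpace.proj (𝕜 := ℝ) i).smulRight (EuclideanSpace.single i (1:ℝ)))

theorem diagCLM_apply {N : ℕ} (lam : Fin N → ℝ) (x : EuclideanSpace ℝ (Fin N)) (j : Fin N) :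
    diagCLM lam x j = lam j * x j := by
  simp only [diagCLM, ContinuousLinearMap.sum_apply, ContinuousLinearMap.smul_apply,
    ContinuousLinearMap.smulRight_apply]
  have : (∑ i : Fin N, lam i • ((EuclideanSpace.proj (𝕜 := ℝ) i) x
        • EuclideanSpace.single i (1:ℝ))) j
      = ∑ i : Fin N, (lam i • ((EuclideanSpace.proj (𝕜 := ℝ) i) x
        • EuclideanSpace.single i (1:ℝ))) j :=
    by rw [WithLp.ofLp_sum, Finset.sum_apply]
  rw [this]
  simp [EuclideanSpace.single_apply, Finset.sum_ite_eq, mul_comm]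

theorem inner_diag {α : Type*} [MeasurableSpace α] {μ : Measure α} {N : ℕ} (lam : Fin N → ℝ)
    (g g' : Lp (EuclideanSpace ℝ (Fin N)) 2 μ) :
    (inner ℝ g (((diagCLM lam).compLpL 2 μ) g') : ℝ)
      = ∑ i, lam i * ∫ t, g t i * g' t i ∂μ := by
  rw [L2.inner_def]
  have hcoe := ContinuousLinearMap.coeFn_compLpL (p := 2) (μ := μ) (diagCLM lam) g'
  have h1 : ∫ t, (inner ℝ (g t) ((((diagCLM lam).compLpL 2 μ) g') t) : ℝ) ∂μ
      = ∫ t, (∑ i, lam i * (g t i * g' t i)) ∂μ := by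
    apply integral_congr_ae
    filter_upwards [hcoe] with t ht
    rw [ht, PiLp.inner_apply]
    congr 1
    ext i
    rw [diagCLM_apply]
    simp [RCLike.inner_apply]
    ring
  rw [h1, integral_finset_sum _ (fun i _ => (comp_int_mul g g' i).const_mul (lam i))]
  congr 1
  ext i
  rw [MeasureTheory.integral_const_mul]

theorem measure_zero_of_setIntegral_nonneg {α : Type*} [MeasurableSpace α] {μ : Measure α}
    {E : Set α} (hE : MeasurableSet E) {g : α → ℝ}
    (hg : IntegrableOn g E μ) (hneg : ∀ t ∈ E, g t < 0) (hint : 0 ≤ ∫ t in E, g t ∂μ) :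
    μ E = 0 := by
  have h1 : 0 ≤ᵐ[μ.restrict E] (fun t => -g t) :=
    (ae_restrict_iff' hE).2 (ae_of_all _ fun t ht => neg_nonneg.2 (hneg t ht).le)
  have h2 : ∫ t in E, (-g t) ∂μ = 0 :=
    le_antisymm (by rw [integral_neg]; linarith) (integral_nonneg_of_ae h1)
  have h3 := (integral_eq_zero_iff_of_nonneg_ae h1 hg.neg).1 h2
  have h4 : ∀ᵐ t ∂μ.restrict E, t ∈ E := ae_restrict_mem hE
  have h5 : ∀ᵐ t ∂μ.restrict E, False := by
    filter_upwards [h3, h4] with t h3t h4t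
    have := hneg t h4t
    simp only [Pi.zero_apply] at h3t
    linarith
  have h6 := ae_iff.mp h5
  simpa [Measure.restrict_apply_univ] using h6

theorem ae_zero_of_setIntegral_zero {α : Type*} [MeasurableSpace α] {μ : Measure α}
    {E : Set α} (hE : MeasurableSet E) {g : α → ℝ}
    (hg : IntegrableOn g E μ) (hnn : ∀ᵐ t ∂μ, t ∈ E → 0 ≤ g t) (hint : ∫ t in E, g t ∂μ = 0) :
    ∀ᵐ t ∂μ, t ∈ E → g t = 0 := by
  have h1 : 0 ≤ᵐ[μ.restrict E] g := (ae_restrict_iff' hE).2 hnn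
  have h3 := (integral_eq_zero_iff_of_nonneg_ae h1 hg).1 hint
  exact (ae_restrict_iff' hE).1 h3

theorem adm_convex {T : ℝ} {N : ℕ} (a b : CtrlSpace T N) : Convex ℝ (admissibleSet a b) := by
  intro u hu v hv s r hs hr hsr
  intro i
  have hc1 : ∀ᵐ t ∂(ctrlMeasure T), (s • u + r • v) t = s • u t + r • v t := by
    filter_upwards [Lp.coeFn_add (s • u) (r • v), Lp.coeFn_smul s u, Lp.coeFn_smul r v]
      with t h1 h2 h3
    rw [h1, Pi.add_apply, h2, h3, Pi.smul_apply, Pi.smul_apply]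
  filter_upwards [hc1, hu i, hv i] with t h1 h2 h3
  have happ : (s • u + r • v) t i = s * u t i + r * v t i := by
    rw [h1]; simp
  rw [happ]
  have e0a : s * a t i + r * a t i = a t i := by rw [← add_mul, hsr, one_mul]
  have e0b : s * b t i + r * b t i = b t i := by rw [← add_mul, hsr, one_mul]
  have e1 := mul_le_mul_of_nonneg_left h2.1 hs
  have e2 := mul_le_mul_of_nonneg_left h3.1 hr
  have e3 := mul_le_mul_of_nonneg_left h2.2 hs
  have e4 := mul_le_mul_of_nonneg_left h3.2 hr
  constructor
  · linarith
  · linarith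

theorem pointwise_VI {T : ℝ} {N : ℕ} (a b : CtrlSpace T N) (lam : Fin N → ℝ)
    (p ubar : CtrlSpace T N) (hubar : ubar ∈ admissibleSet a b)
    (hVI : ∀ u ∈ admissibleSet a b, ∀ i : Fin N,
        0 ≤ ∫ t, (lam i * ubar t i - p t i) * (u t i - ubar t i) ∂(ctrlMeasure T))
    (u : CtrlSpace T N) (hu : u ∈ admissibleSet a b) (i : Fin N) :
    ∀ᵐ t ∂(ctrlMeasure T), 0 ≤ (lam i * ubar t i - p t i) * (u t i - ubar t i) := by
  set μ := ctrlMeasure T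
  set d : ℝ → ℝ := fun t => lam i * ubar t i - p t i with hd
  set g : ℝ → ℝ := fun t => d t * (u t i - ubar t i) with hg
  have hd_mem : MemLp d 2 μ := ((comp_mem ubar i).const_mul (lam i)).sub (comp_mem p i)
  have hdiff_mem : MemLp (fun t => u t i - ubar t i) 2 μ := (comp_mem u i).sub (comp_mem ubar i)
  have hg_sm : StronglyMeasurable g :=
    (((comp_sm ubar i).const_mul (lam i)).sub (comp_sm p i)).mul
      ((comp_sm u i).sub (comp_sm ubar i))
  have hg_int : Integrable g μ := mem_mul_integrable hd_mem hdiff_mem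
  set E : Set ℝ := {t | g t < 0} with hE
  have hEm : MeasurableSet E := measurableSet_lt hg_sm.measurable measurable_const
  set F : ℝ → EuclideanSpace ℝ (Fin N) :=
    fun t => (u t i - ubar t i) • EuclideanSpace.single i (1:ℝ) with hF
  have hF_mem : MemLp F 2 μ := by
    refine MemLp.of_le hdiff_mem
      ((((comp_sm u i).sub (comp_sm ubar i)).smul_const _).aestronglyMeasurable)
      (Filter.Eventually.of_forall fun t => ?_)
    rw [hF, norm_smul, EuclideanSpace.norm_single]
    simp
  have hFi_mem : MemLp (E.indicator F) 2 μ := hF_mem.indicator hEm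
  set w : CtrlSpace T N := ubar + hFi_mem.toLp (E.indicator F) with hw
  have hw_coe : ∀ᵐ t ∂μ, w t = ubar t + E.indicator F t := by
    filter_upwards [Lp.coeFn_add ubar (hFi_mem.toLp (E.indicator F)), hFi_mem.coeFn_toLp]
      with t h1 h2
    rw [hw, h1, Pi.add_apply, h2]
  have hw_mem : w ∈ admissibleSet a b := by
    intro j
    filter_upwards [hw_coe, hubar j, hu j] with t h1 h2 h3
    rw [h1]
    by_cases htE : t ∈ E
    · rw [Set.indicator_of_mem htE]
      by_cases hji : j = i
      · subst hji
        have : (ubar t + F t) j = u t j := by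
          simp [hF, EuclideanSpace.single_apply]
        rw [this]; exact h3
      · have : (ubar t + F t) j = ubar t j := by
          simp [hF, EuclideanSpace.single_apply, hji]
        rw [this]; exact h2
    · rw [Set.indicator_of_notMem htE]
      simpa using h2
  have hVIw := hVI w hw_mem i
  have hint_eq : ∫ t, (lam i * ubar t i - p t i) * (w t i - ubar t i) ∂μ
      = ∫ t in E, g t ∂μ := by
    rw [← integral_indicator hEm]
    apply integral_congr_ae
    filter_upwards [hw_coe] with t h1
    rw [h1]
    by_cases htE : t ∈ E
    · rw [Set.indicator_of_mem htE, Set.indicator_of_mem htE]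
      have : (ubar t + F t) i - ubar t i = u t i - ubar t i := by
        simp [hF, EuclideanSpace.single_apply]
      rw [this]
    · rw [Set.indicator_of_notMem htE, Set.indicator_of_notMem htE]
      simp
  rw [hint_eq] at hVIw
  have hE0 : μ E = 0 :=
    measure_zero_of_setIntegral_nonneg hEm hg_int.integrableOn (fun t ht => ht) hVIw
  have : ∀ᵐ t ∂μ, t ∉ E := by
    rw [ae_iff]
    simpa using hE0
  filter_upwards [this] with t ht
  simpa [hE, hg, hd] using ht

theorem setIntegral_weak_lim {T : ℝ} {N : ℕ} (hk : ℕ → CtrlSpace T N) (h₀ : CtrlSpace T N)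
    (hweak : ∀ w : CtrlSpace T N,
      Tendsto (fun k => (inner ℝ (hk k) w : ℝ)) atTop (𝓝 (inner ℝ h₀ w)))
    (i : Fin N) {S : Set ℝ} (hS : MeasurableSet S) :
    Tendsto (fun k => ∫ t in S, hk k t i ∂(ctrlMeasure T)) atTop
      (𝓝 (∫ t in S, h₀ t i ∂(ctrlMeasure T))) := by
  have hne : (ctrlMeasure T) S ≠ ⊤ := measure_ne_top _ _
  have := hweak (indicatorConstLp 2 hS hne (EuclideanSpace.single i (1:ℝ)))
  rw [inner_ind h₀ i hS hne] at this
  refine this.congr fun k => ?_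
  rw [inner_ind (hk k) i hS hne]

theorem ae_nonneg_on_of_weak {T : ℝ} {N : ℕ} (hk : ℕ → CtrlSpace T N) (h₀ : CtrlSpace T N)
    (hweak : ∀ w : CtrlSpace T N,
      Tendsto (fun k => (inner ℝ (hk k) w : ℝ)) atTop (𝓝 (inner ℝ h₀ w)))
    (i : Fin N) {S : Set ℝ} (hS : MeasurableSet S)
    (hnn : ∀ k, ∀ᵐ t ∂(ctrlMeasure T), t ∈ S → 0 ≤ hk k t i) :
    ∀ᵐ t ∂(ctrlMeasure T), t ∈ S → 0 ≤ h₀ t i := by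
  set μ := ctrlMeasure T
  set B : Set ℝ := S ∩ {t | h₀ t i < 0} with hB
  have hBm : MeasurableSet B :=
    hS.inter (measurableSet_lt (comp_sm h₀ i).measurable measurable_const)
  have hlim := setIntegral_weak_lim hk h₀ hweak i hBm
  have hnn' : ∀ k, 0 ≤ ∫ t in B, hk k t i ∂μ := fun k =>
    setIntegral_nonneg_ae hBm ((hnn k).mono fun t ht htB => ht htB.1)
  have hlim_nn : 0 ≤ ∫ t in B, h₀ t i ∂μ := ge_of_tendsto' hlim hnn'
  have hB0 : μ B = 0 :=
    measure_zero_of_setIntegral_nonneg hBm (comp_integrable h₀ i).integrableOn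
      (fun t ht => ht.2) hlim_nn
  have : ∀ᵐ t ∂μ, t ∉ B := by rw [ae_iff]; simpa using hB0
  filter_upwards [this] with t ht htS
  by_contra hneg
  exact ht ⟨htS, lt_of_not_ge hneg⟩

theorem vanish_on_pos {T : ℝ} {N : ℕ} (hk : ℕ → CtrlSpace T N) (h₀ : CtrlSpace T N)
    (hweak : ∀ w : CtrlSpace T N,
      Tendsto (fun k => (inner ℝ (hk k) w : ℝ)) atTop (𝓝 (inner ℝ h₀ w)))
    (i : Fin N) (d : ℝ → ℝ) (hd_sm : StronglyMeasurable d)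
    (hd_mem : MemLp d 2 (ctrlMeasure T))
    (hsgn : ∀ k, ∀ᵐ t ∂(ctrlMeasure T), 0 ≤ d t * hk k t i)
    (hT0 : Tendsto (fun k => ∫ t, d t * hk k t i ∂(ctrlMeasure T)) atTop (𝓝 0)) (m : ℕ) :
    ∀ᵐ t ∂(ctrlMeasure T), 1/((m:ℝ)+1) ≤ d t → h₀ t i = 0 := by
  set μ := ctrlMeasure T with hμ
  set δ : ℝ := 1/((m:ℝ)+1) with hδ
  have hδpos : 0 < δ := by positivity
  set S : Set ℝ := {t | δ ≤ d t} with hSdef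
  have hS : MeasurableSet S := measurableSet_le measurable_const hd_sm.measurable
  have hknn : ∀ k, ∀ᵐ t ∂μ, t ∈ S → 0 ≤ hk k t i := by
    intro k
    filter_upwards [hsgn k] with t h1 ht
    have hdt : 0 < d t := lt_of_lt_of_le hδpos ht
    exact (mul_nonneg_iff_of_pos_left hdt).1 h1
  have h0nn : ∀ᵐ t ∂μ, t ∈ S → 0 ≤ h₀ t i := ae_nonneg_on_of_weak hk h₀ hweak i hS hknn
  have hint0 : ∫ t in S, h₀ t i ∂μ = 0 := by
    have hlim := setIntegral_weak_lim hk h₀ hweak i hS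
    have hup : ∀ k, ∫ t in S, hk k t i ∂μ ≤ ((m:ℝ)+1) * ∫ t, d t * hk k t i ∂μ := by
      intro k
      have hint_dh : Integrable (fun t => d t * hk k t i) μ :=
        mem_mul_integrable hd_mem (comp_mem (hk k) i)
      have h1 : ∫ t in S, δ * hk k t i ∂μ ≤ ∫ t in S, d t * hk k t i ∂μ := by
        apply integral_mono_ae ((comp_integrable (hk k) i).const_mul δ).integrableOn
          hint_dh.integrableOn
        rw [EventuallyLE, ae_restrict_iff' hS]
        filter_upwards [hknn k] with t h1 ht
        exact mul_le_mul_of_nonneg_right ht (h1 ht)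
      have h2 : ∫ t in S, d t * hk k t i ∂μ ≤ ∫ t, d t * hk k t i ∂μ :=
        setIntegral_le_integral hint_dh (hsgn k)
      have h3 : ∫ t in S, δ * hk k t i ∂μ = δ * ∫ t in S, hk k t i ∂μ :=
        MeasureTheory.integral_const_mul δ _
      have h4 : δ * ∫ t in S, hk k t i ∂μ ≤ ∫ t, d t * hk k t i ∂μ := by
        rw [← h3]; exact h1.trans h2
      calc ∫ t in S, hk k t i ∂μ = ((m:ℝ)+1) * (δ * ∫ t in S, hk k t i ∂μ) := by
            rw [hδ]; field_simp
        _ ≤ ((m:ℝ)+1) * ∫ t, d t * hk k t i ∂μ :=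
            mul_le_mul_of_nonneg_left h4 (by positivity)
    have hlow : ∀ k, 0 ≤ ∫ t in S, hk k t i ∂μ := fun k =>
      setIntegral_nonneg_ae hS (hknn k)
    have hupper_to0 : Tendsto (fun k => ((m:ℝ)+1) * ∫ t, d t * hk k t i ∂μ) atTop (𝓝 0) := by
      have := hT0.const_mul ((m:ℝ)+1)
      simpa using this
    exact tendsto_nhds_unique hlim (squeeze_zero hlow hup hupper_to0)
  exact ae_zero_of_setIntegral_zero hS (comp_integrable h₀ i).integrableOn h0nn hint0

theorem cone_mem {T : ℝ} {N : ℕ} (a b ubar p : CtrlSpace T N) (lam : Fin N → ℝ)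
    (hk : ℕ → CtrlSpace T N) (h₀ : CtrlSpace T N)
    (hweak : ∀ w : CtrlSpace T N,
      Tendsto (fun k => (inner ℝ (hk k) w : ℝ)) atTop (𝓝 (inner ℝ h₀ w)))
    (hsgn : ∀ k (i : Fin N), ∀ᵐ t ∂(ctrlMeasure T),
      0 ≤ (lam i * ubar t i - p t i) * hk k t i)
    (hsa : ∀ k (i : Fin N), ∀ᵐ t ∂(ctrlMeasure T), ubar t i = a t i → 0 ≤ hk k t i)
    (hsb : ∀ k (i : Fin N), ∀ᵐ t ∂(ctrlMeasure T), ubar t i = b t i → hk k t i ≤ 0)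
    (hT0 : ∀ i : Fin N, Tendsto
      (fun k => ∫ t, (lam i * ubar t i - p t i) * hk k t i ∂(ctrlMeasure T)) atTop (𝓝 0)) :
    h₀ ∈ criticalCone a b ubar p lam := by
  set μ := ctrlMeasure T with hμ
  intro i
  set d : ℝ → ℝ := fun t => lam i * ubar t i - p t i with hd
  have hd_sm : StronglyMeasurable d := ((comp_sm ubar i).const_mul (lam i)).sub (comp_sm p i)
  have hd_mem : MemLp d 2 μ := ((comp_mem ubar i).const_mul (lam i)).sub (comp_mem p i)
  have hweak' : ∀ w : CtrlSpace T N,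
      Tendsto (fun k => (inner ℝ (-(hk k)) w : ℝ)) atTop (𝓝 (inner ℝ (-h₀) w)) := by
    intro w
    simp only [inner_neg_left]
    exact (hweak w).neg
  have hneg_coe : ∀ g : CtrlSpace T N, ∀ᵐ t ∂μ, (-g : CtrlSpace T N) t i = -(g t i) := by
    intro g
    filter_upwards [Lp.coeFn_neg g] with t ht
    rw [ht]
    simp
  have hA : ∀ᵐ t ∂μ, ubar t i = a t i → 0 ≤ h₀ t i := by
    have hS : MeasurableSet {t : ℝ | ubar t i = a t i} :=
      measurableSet_eq_fun (comp_sm ubar i).measurable (comp_sm a i).measurable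
    exact ae_nonneg_on_of_weak hk h₀ hweak i hS (fun k => (hsa k i).mono fun t ht h => ht h)
  have hB : ∀ᵐ t ∂μ, ubar t i = b t i → h₀ t i ≤ 0 := by
    have hS : MeasurableSet {t : ℝ | ubar t i = b t i} :=
      measurableSet_eq_fun (comp_sm ubar i).measurable (comp_sm b i).measurable
    have key := ae_nonneg_on_of_weak (fun k => -(hk k)) (-h₀) hweak' i hS ?_
    · filter_upwards [key, hneg_coe h₀] with t h1 h2 h3
      have := h1 h3
      rw [h2] at this
      linarith
    · intro k
      filter_upwards [hsb k i, hneg_coe (hk k)] with t h1 h2 h3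
      rw [h2]
      linarith [h1 h3]
  have hCp : ∀ m : ℕ, ∀ᵐ t ∂μ, 1/((m:ℝ)+1) ≤ d t → h₀ t i = 0 :=
    vanish_on_pos hk h₀ hweak i d hd_sm hd_mem (fun k => hsgn k i) (hT0 i)
  have hCn : ∀ m : ℕ, ∀ᵐ t ∂μ, 1/((m:ℝ)+1) ≤ -(d t) → h₀ t i = 0 := by
    intro m
    have hsgn' : ∀ k, ∀ᵐ t ∂μ, 0 ≤ (-(d t)) * (-(hk k) : CtrlSpace T N) t i := by
      intro k
      filter_upwards [hsgn k i, hneg_coe (hk k)] with t h1 h2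
      rw [h2]
      simpa using h1
    have hT0' : Tendsto (fun k => ∫ t, (-(d t)) * (-(hk k) : CtrlSpace T N) t i ∂μ)
        atTop (𝓝 0) := by
      refine (hT0 i).congr fun k => ?_
      apply integral_congr_ae
      filter_upwards [hneg_coe (hk k)] with t h2
      rw [h2]
      ring
    have key := vanish_on_pos (fun k => -(hk k)) (-h₀) hweak' i (fun t => -(d t))
      hd_sm.neg hd_mem.neg hsgn' hT0' m
    filter_upwards [key, hneg_coe h₀] with t h1 h2 h3
    have := h1 h3
    rw [h2] at this
    linarith
  filter_upwards [hA, hB, ae_all_iff.2 hCp, ae_all_iff.2 hCn] with t h1 h2 h3 h4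
  refine ⟨h1, h2, fun hdne => ?_⟩
  rcases lt_or_gt_of_ne hdne with hlt | hgt
  · obtain ⟨m, hm⟩ := exists_nat_one_div_lt (neg_pos.2 hlt)
    exact h4 m (by linarith)
  · obtain ⟨m, hm⟩ := exists_nat_one_div_lt hgt
    exact h3 m (by linarith)

end Aux

set_option maxHeartbeats 2000000

/-- **Second-order sufficient optimality condition.**
Suppose `ū ∈ 𝕌` satisfies (i) the variational inequality
`∫₀ᵀ (λ_i ū_i − p_i)(u_i − ū_i) dt ≥ 0` for all `u ∈ 𝕌` and all `i`, and (ii) the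
second-order condition `J''(ū)[h,h] > 0` for every critical direction `h ∈ C_ū \ {0}`.
Here `J` is twice continuously Fréchet differentiable on an open set `O ⊇ 𝕌` with the
structural properties of the reduced cost functional: Hölder continuity of `J''` on `𝕌`,
the first-order representation `J'(ū)[h] = Σ_i ∫₀ᵀ (λ_i ū_i − p_i) h_i dt`, and the
second-order structure `J''(ū)[h,h̃] = Σ_i λ_i ⟨h_i,h̃_i⟩_{L²} − Q(h,h̃)` with a continuous
bilinear form `Q` turning weak convergence into convergence of the quadratic values.
Then `J` satisfies a quadratic growth condition at `ū`: there exist `δ > 0` and `ε > 0`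
such that `J(u) ≥ J(ū) + (ε/2)‖u − ū‖²` for all `u ∈ 𝕌` with `‖u − ū‖ < δ`; in
particular `ū` is a strict local minimizer of `J` on `𝕌`. -/
theorem second_order_sufficient_condition
    (T : ℝ) (hT : 0 < T) (N : ℕ) (a b : CtrlSpace T N)
    (hab : ∀ i : Fin N, ∀ᵐ t ∂(ctrlMeasure T), a t i ≤ 0 ∧ 0 ≤ b t i)
    (lam : Fin N → ℝ) (hlam : ∀ i, 0 < lam i)
    (p : CtrlSpace T N)
    (O : Set (CtrlSpace T N)) (hO : IsOpen O) (hUO : admissibleSet a b ⊆ O)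
    (J : CtrlSpace T N → ℝ)
    (J' : CtrlSpace T N → (CtrlSpace T N →L[ℝ] ℝ))
    (J'' : CtrlSpace T N → (CtrlSpace T N →L[ℝ] CtrlSpace T N →L[ℝ] ℝ))
    (hJ' : ∀ u ∈ O, HasFDerivAt J (J' u) u)
    (hJ'' : ∀ u ∈ O, HasFDerivAt J' (J'' u) u)
    (hJ''cont : ContinuousOn J'' O)
    -- (1) Hölder continuity of the second derivative on 𝕌:
    (C γ : ℝ) (hC : 0 < C) (hγ : 0 < γ ∧ γ ≤ 1)
    (hHolder : ∀ u ∈ admissibleSet a b, ∀ v ∈ admissibleSet a b,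
        ‖J'' u - J'' v‖ ≤ C * ‖u - v‖ ^ γ)
    (ubar : CtrlSpace T N) (hubar : ubar ∈ admissibleSet a b)
    -- (2) first-order representation at ū:
    (hJ'rep : ∀ h : CtrlSpace T N,
        J' ubar h = ∑ i : Fin N, ∫ t, (lam i * ubar t i - p t i) * h t i ∂(ctrlMeasure T))
    -- (3) second-order structure at ū:
    (Q : CtrlSpace T N →L[ℝ] CtrlSpace T N →L[ℝ] ℝ)
    (hQweak : ∀ (h : ℕ → CtrlSpace T N) (h₀ : CtrlSpace T N),
        (∀ w : CtrlSpace T N,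
          Tendsto (fun k => (inner ℝ (h k) w : ℝ)) atTop (nhds (inner ℝ h₀ w))) →
        Tendsto (fun k => Q (h k) (h k)) atTop (nhds (Q h₀ h₀)))
    (hJ''rep : ∀ h htilde : CtrlSpace T N,
        J'' ubar h htilde
          = (∑ i : Fin N, lam i * ∫ t, h t i * htilde t i ∂(ctrlMeasure T)) - Q h htilde)
    -- (i) the variational inequality:
    (hVI : ∀ u ∈ admissibleSet a b, ∀ i : Fin N,
        0 ≤ ∫ t, (lam i * ubar t i - p t i) * (u t i - ubar t i) ∂(ctrlMeasure T))
    -- (ii) the second-order condition on the critical cone: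
    (hSOC : ∀ h ∈ criticalCone a b ubar p lam, h ≠ 0 → 0 < J'' ubar h h) :
    ∃ δ > (0:ℝ), ∃ ε > (0:ℝ), ∀ u ∈ admissibleSet a b,
      ‖u - ubar‖ < δ → J ubar + ε / 2 * ‖u - ubar‖ ^ 2 ≤ J u := by
  classical
  by_contra hcon
  push_neg at hcon
  -- extract a minimizing counterexample sequence
  have hseq : ∀ k : ℕ, ∃ u, u ∈ admissibleSet a b ∧ ‖u - ubar‖ < 1/((k:ℝ)+1) ∧
      J u < J ubar + (1/((k:ℝ)+1))/2 * ‖u - ubar‖^2 := by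
    intro k
    obtain ⟨u, hu1, hu2, hu3⟩ := hcon (1/((k:ℝ)+1)) (by positivity) (1/((k:ℝ)+1)) (by positivity)
    exact ⟨u, hu1, hu2, hu3⟩
  choose u hu hρlt hJu using hseq
  have hρpos : ∀ k, 0 < ‖u k - ubar‖ := by
    intro k
    rcases (norm_nonneg (u k - ubar)).lt_or_eq with hlt | heq
    · exact hlt
    · exfalso
      have hzero : u k = ubar := sub_eq_zero.1 (norm_eq_zero.1 heq.symm)
      have hk := hJu k
      rw [hzero] at hk
      simp at hk
  set ρ : ℕ → ℝ := fun k => ‖u k - ubar‖ with hρdef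
  set h : ℕ → CtrlSpace T N := fun k => (ρ k)⁻¹ • (u k - ubar) with hh
  have hx : ∀ k, u k - ubar = ρ k • h k := fun k => (smul_inv_smul₀ (hρpos k).ne' _).symm
  have hnorm : ∀ k, ‖h k‖ = 1 := by
    intro k
    rw [hh, norm_smul, norm_inv, Real.norm_eq_abs, abs_of_pos (hρpos k)]
    exact inv_mul_cancel₀ (hρpos k).ne'
  rcases Nat.eq_zero_or_pos N with hN | hN
  · subst hN
    haveI : Subsingleton (EuclideanSpace ℝ (Fin 0)) := ⟨fun x y => PiLp.ext fun i => (i : Fin 0).elim0⟩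
    have h0 : h 0 = 0 := Lp.ext (Filter.Eventually.of_forall fun t => Subsingleton.elim _ _)
    have := hnorm 0
    rw [h0, norm_zero] at this
    norm_num at this
  haveI : Nonempty (Fin N) := Fin.pos_iff_nonempty.1 hN
  set lmin : ℝ := Finset.univ.inf' Finset.univ_nonempty lam with hlmin
  have hlmin_pos : 0 < lmin := (Finset.lt_inf'_iff _).2 (fun i _ => hlam i)
  have hlmin_le : ∀ i, lmin ≤ lam i := fun i => Finset.inf'_le _ (Finset.mem_univ i)
  -- pointwise description of h k
  have hk_coe : ∀ k, ∀ᵐ t ∂(ctrlMeasure T), ∀ i : Fin N,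
      h k t i = (ρ k)⁻¹ * (u k t i - ubar t i) := by
    intro k
    filter_upwards [Lp.coeFn_smul ((ρ k)⁻¹) (u k - ubar), Lp.coeFn_sub (u k) ubar] with t h1 h2
    intro i
    have : (h k : ℝ → EuclideanSpace ℝ (Fin N)) t = (ρ k)⁻¹ • ((u k - ubar) t) := h1
    rw [this, h2]
    simp
  -- Taylor expansion along the counterexample sequence
  have hkadm : ∀ k, ∀ s ∈ Set.Icc (0:ℝ) 1, ubar + s • (u k - ubar) ∈ admissibleSet a b := by
    intro k s hs
    have hmem := (adm_convex a b) hubar (hu k) (by linarith [hs.2] : (0:ℝ) ≤ 1 - s) hs.1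
      (by ring)
    have heq : (1 - s) • ubar + s • u k = ubar + s • (u k - ubar) := by
      rw [smul_sub, sub_smul, one_smul]
      abel
    rwa [heq] at hmem
  have htaylor : ∀ k, |J (u k) - J ubar - J' ubar (u k - ubar)
      - 1/2 * J'' ubar (u k - ubar) (u k - ubar)| ≤ (C * ρ k ^ γ) * ρ k^2 := by
    intro k
    apply taylor_est J J' J'' O hJ' hJ'' ubar (u k)
    · intro s hs
      exact hUO (hkadm k s hs)
    · intro s hs
      have hmem := hkadm k s hs
      have hH := hHolder _ hmem ubar hubar
      have harg : (ubar + s • (u k - ubar)) - ubar = s • (u k - ubar) := by abel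
      rw [harg] at hH
      refine hH.trans ?_
      apply mul_le_mul_of_nonneg_left ?_ hC.le
      apply Real.rpow_le_rpow (norm_nonneg _) ?_ hγ.1.le
      rw [norm_smul, Real.norm_eq_abs, abs_of_nonneg hs.1]
      nlinarith [hs.2, hρpos k]
  -- scalar identities
  have hA_eq : ∀ k, J' ubar (u k - ubar) = ρ k * J' ubar (h k) := by
    intro k
    rw [hx k, ContinuousLinearMap.map_smul, smul_eq_mul]
  have hB_eq : ∀ k, J'' ubar (u k - ubar) (u k - ubar) = ρ k^2 * J'' ubar (h k) (h k) := by
    intro k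
    rw [hx k, ContinuousLinearMap.map_smul]
    simp only [ContinuousLinearMap.coe_smul', Pi.smul_apply, ContinuousLinearMap.map_smul,
      smul_eq_mul]
    ring
  -- the individual first-order terms
  set term : ℕ → Fin N → ℝ :=
    fun k i => ∫ t, (lam i * ubar t i - p t i) * h k t i ∂(ctrlMeasure T) with hterm
  have hterm_eq : ∀ k i, term k i
      = (ρ k)⁻¹ * ∫ t, (lam i * ubar t i - p t i) * (u k t i - ubar t i) ∂(ctrlMeasure T) := by
    intro k i
    rw [hterm, ← MeasureTheory.integral_const_mul]
    apply integral_congr_ae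
    filter_upwards [hk_coe k] with t h1
    rw [h1 i]
    ring
  have hterm_nn : ∀ k i, 0 ≤ term k i := by
    intro k i
    rw [hterm_eq k i]
    exact mul_nonneg (inv_nonneg.2 (hρpos k).le) (hVI (u k) (hu k) i)
  have hJ'h_eq : ∀ k, J' ubar (h k) = ∑ i, term k i := fun k => hJ'rep (h k)
  have hJ'h_nn : ∀ k, 0 ≤ J' ubar (h k) := fun k =>
    (hJ'h_eq k) ▸ Finset.sum_nonneg (fun i _ => hterm_nn k i)
  -- quantitative bounds from the Taylor expansion
  have hρ1 : ∀ k, ρ k ≤ 1 := by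
    intro k
    refine (hρlt k).le.trans ?_
    rw [div_le_one (by positivity)]
    linarith [Nat.cast_nonneg (α := ℝ) k]
  have hrpow1 : ∀ k, ρ k ^ γ ≤ 1 := fun k => Real.rpow_le_one (hρpos k).le (hρ1 k) hγ.1.le
  have hB_le : ∀ k, J'' ubar (h k) (h k) ≤ 1/((k:ℝ)+1) + 2*C*ρ k ^ γ := by
    intro k
    have ht := (abs_le.1 (htaylor k)).1
    have h2 := hJu k
    have hAnn : 0 ≤ J' ubar (u k - ubar) := by
      rw [hA_eq]
      exact mul_nonneg (hρpos k).le (hJ'h_nn k)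
    have hρeq : ‖u k - ubar‖ = ρ k := rfl
    rw [hρeq] at h2
    have hcore : ρ k^2 * J'' ubar (h k) (h k) ≤ (1/((k:ℝ)+1) + 2*C*ρ k ^ γ) * ρ k^2 := by
      rw [← hB_eq k]
      nlinarith [ht, h2, hAnn]
    have hρ2 : (0:ℝ) < ρ k^2 := pow_pos (hρpos k) 2
    have := le_of_mul_le_mul_right (by linarith [hcore] :
      J'' ubar (h k) (h k) * ρ k^2 ≤ (1/((k:ℝ)+1) + 2*C*ρ k ^ γ) * ρ k^2) hρ2
    exact this
  have hJ'h_le : ∀ k, J' ubar (h k) ≤ ρ k * (1/2 + C + ‖J'' ubar‖/2) := by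
    intro k
    have ht := (abs_le.1 (htaylor k)).1
    have h2 := hJu k
    have hρeq : ‖u k - ubar‖ = ρ k := rfl
    rw [hρeq] at h2
    have hBabs : |J'' ubar (u k - ubar) (u k - ubar)| ≤ ‖J'' ubar‖ * ρ k^2 := by
      have e1 : ‖J'' ubar (u k - ubar) (u k - ubar)‖
          ≤ ‖J'' ubar (u k - ubar)‖ * ‖u k - ubar‖ :=
        (J'' ubar (u k - ubar)).le_opNorm _
      have e2 : ‖J'' ubar (u k - ubar)‖ ≤ ‖J'' ubar‖ * ‖u k - ubar‖ :=
        (J'' ubar).le_opNorm _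
      rw [Real.norm_eq_abs] at e1
      calc |J'' ubar (u k - ubar) (u k - ubar)| ≤ ‖J'' ubar (u k - ubar)‖ * ρ k := e1
        _ ≤ (‖J'' ubar‖ * ρ k) * ρ k := by
            apply mul_le_mul_of_nonneg_right e2 (hρpos k).le
        _ = ‖J'' ubar‖ * ρ k^2 := by ring
    have e3 : C * ρ k^γ * ρ k^2 ≤ C * ρ k^2 := by
      calc C * ρ k^γ * ρ k^2 = (C * ρ k^2) * ρ k^γ := by ring
        _ ≤ (C * ρ k^2) * 1 := mul_le_mul_of_nonneg_left (hrpow1 k) (by positivity)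
        _ = C * ρ k^2 := by ring
    have e4 : 1/((k:ℝ)+1)/2 * ρ k^2 ≤ 1/2 * ρ k^2 := by
      have : 1/((k:ℝ)+1) ≤ 1 := by
        rw [div_le_one (by positivity)]
        linarith [Nat.cast_nonneg (α := ℝ) k]
      nlinarith [sq_nonneg (ρ k)]
    have hBlow : -(‖J'' ubar‖ * ρ k^2) ≤ J'' ubar (u k - ubar) (u k - ubar) :=
      neg_le_of_abs_le hBabs
    have hA'' : J' ubar (u k - ubar) ≤ ρ k^2 * (1/2 + C + ‖J'' ubar‖/2) := by
      nlinarith [ht, h2, hBlow, e3, e4]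
    rw [hA_eq k] at hA''
    have := le_of_mul_le_mul_left
      (by nlinarith [hA''] : ρ k * J' ubar (h k) ≤ ρ k * (ρ k * (1/2 + C + ‖J'' ubar‖/2)))
      (hρpos k)
    exact this
  -- limits
  have hρ0 : Tendsto ρ atTop (𝓝 0) :=
    squeeze_zero (fun k : ℕ => norm_nonneg (u k - ubar)) (fun k : ℕ => (hρlt k).le)
      tendsto_one_div_add_atTop_nhds_zero_nat
  have hrpow0 : Tendsto (fun k => ρ k ^ γ) atTop (𝓝 0) := by
    have := hρ0.rpow_const (p := γ) (Or.inr hγ.1.le)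
    rwa [Real.zero_rpow hγ.1.ne'] at this
  have hβ0 : Tendsto (fun k : ℕ => 1/((k:ℝ)+1) + 2*C*ρ k ^ γ) atTop (𝓝 0) := by
    have h2 := hrpow0.const_mul (2*C)
    have := tendsto_one_div_add_atTop_nhds_zero_nat.add h2
    simpa using this
  have hJ'h0 : Tendsto (fun k => J' ubar (h k)) atTop (𝓝 0) := by
    apply squeeze_zero hJ'h_nn hJ'h_le
    simpa using hρ0.mul_const (1/2 + C + ‖J'' ubar‖/2)
  have hterm0 : ∀ i, Tendsto (fun k => term k i) atTop (𝓝 0) := by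
    intro i
    apply squeeze_zero (fun k => hterm_nn k i) (fun k => ?_) hJ'h0
    exact le_of_le_of_eq
      (Finset.single_le_sum (fun j _ => hterm_nn k j) (Finset.mem_univ i)) (hJ'h_eq k).symm
  -- weak limit of the normalized directions
  obtain ⟨φ, hφ, h₀, hweak⟩ := weak_seq_compact h 1 (fun k => le_of_eq (hnorm k))
  -- the weak limit lies in the critical cone
  have hsgn : ∀ k (i : Fin N), ∀ᵐ t ∂(ctrlMeasure T),
      0 ≤ (lam i * ubar t i - p t i) * h k t i := by
    intro k i
    have hpvi := pointwise_VI a b lam p ubar hubar hVI (u k) (hu k) i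
    filter_upwards [hpvi, hk_coe k] with t h1 h2
    rw [h2 i, show (lam i * ubar t i - p t i) * ((ρ k)⁻¹ * (u k t i - ubar t i))
        = (ρ k)⁻¹ * ((lam i * ubar t i - p t i) * (u k t i - ubar t i)) from by ring]
    exact mul_nonneg (inv_nonneg.2 (hρpos k).le) h1
  have hsa : ∀ k (i : Fin N), ∀ᵐ t ∂(ctrlMeasure T), ubar t i = a t i → 0 ≤ h k t i := by
    intro k i
    filter_upwards [hu k i, hk_coe k] with t h1 h2 h3
    rw [h2 i]
    have hd : 0 ≤ u k t i - ubar t i := by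
      rw [h3]
      linarith [h1.1]
    exact mul_nonneg (inv_nonneg.2 (hρpos k).le) hd
  have hsb : ∀ k (i : Fin N), ∀ᵐ t ∂(ctrlMeasure T), ubar t i = b t i → h k t i ≤ 0 := by
    intro k i
    filter_upwards [hu k i, hk_coe k] with t h1 h2 h3
    rw [h2 i]
    have hd : u k t i - ubar t i ≤ 0 := by
      rw [h3]
      linarith [h1.2]
    exact mul_nonpos_of_nonneg_of_nonpos (inv_nonneg.2 (hρpos k).le) hd
  have hcone : h₀ ∈ criticalCone a b ubar p lam :=
    cone_mem a b ubar p lam (fun k => h (φ k)) h₀ hweak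
      (fun k i => hsgn (φ k) i) (fun k i => hsa (φ k) i) (fun k i => hsb (φ k) i)
      (fun i => (hterm0 i).comp hφ.tendsto_atTop)
  -- second derivative structure
  set M : CtrlSpace T N →L[ℝ] CtrlSpace T N := (diagCLM lam).compLpL 2 (ctrlMeasure T) with hM
  have hJ''M : ∀ g g' : CtrlSpace T N, J'' ubar g g' = (inner ℝ g (M g') : ℝ) - Q g g' := by
    intro g g'
    rw [hJ''rep g g', hM, inner_diag]
  have hMsymm : ∀ g g' : CtrlSpace T N, (inner ℝ g (M g') : ℝ) = inner ℝ g' (M g) := by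
    intro g g'
    rw [hM, inner_diag, inner_diag]
    congr 1
    ext i
    congr 1
    exact integral_congr_ae (Filter.Eventually.of_forall fun t => mul_comm _ _)
  have hMcoer : ∀ g : CtrlSpace T N, lmin * ‖g‖^2 ≤ (inner ℝ g (M g) : ℝ) := by
    intro g
    rw [hM, inner_diag, norm_sq_sum g, Finset.mul_sum]
    apply Finset.sum_le_sum
    intro i _
    exact mul_le_mul_of_nonneg_right (hlmin_le i)
      (integral_nonneg (fun t => mul_self_nonneg _))
  have hMnn : ∀ g : CtrlSpace T N, 0 ≤ (inner ℝ g (M g) : ℝ) := by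
    intro g
    refine le_trans ?_ (hMcoer g)
    positivity
  have hlower : ∀ g : CtrlSpace T N,
      2*(inner ℝ g (M h₀) : ℝ) - (inner ℝ h₀ (M h₀) : ℝ) ≤ (inner ℝ g (M g) : ℝ) := by
    intro g
    have h0 := hMnn (g - h₀)
    have hexp : (inner ℝ (g - h₀) (M (g - h₀)) : ℝ)
        = (inner ℝ g (M g) : ℝ) - 2*(inner ℝ g (M h₀) : ℝ) + (inner ℝ h₀ (M h₀) : ℝ) := by
      rw [map_sub, inner_sub_left, inner_sub_right, inner_sub_right]
      have hsg := hMsymm h₀ g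
      linarith
    linarith
  have hβφ := hβ0.comp hφ.tendsto_atTop
  have hQlim := hQweak (fun k => h (φ k)) h₀ hweak
  have hMweak := hweak (M h₀)
  have hseq_le : ∀ k, 2*(inner ℝ (h (φ k)) (M h₀) : ℝ) - (inner ℝ h₀ (M h₀) : ℝ)
      - Q (h (φ k)) (h (φ k)) ≤ 1/((φ k : ℝ)+1) + 2*C*ρ (φ k)^γ := by
    intro k
    have h1 := hlower (h (φ k))
    have h2 := hB_le (φ k)
    rw [hJ''M] at h2
    linarith
  have hlhs_lim : Tendsto (fun k => 2*(inner ℝ (h (φ k)) (M h₀) : ℝ) - (inner ℝ h₀ (M h₀) : ℝ)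
      - Q (h (φ k)) (h (φ k))) atTop
      (𝓝 (2*(inner ℝ h₀ (M h₀) : ℝ) - (inner ℝ h₀ (M h₀) : ℝ) - Q h₀ h₀)) :=
    ((hMweak.const_mul 2).sub tendsto_const_nhds).sub hQlim
  have hkey : (inner ℝ h₀ (M h₀) : ℝ) - Q h₀ h₀ ≤ 0 := by
    have := le_of_tendsto_of_tendsto' hlhs_lim hβφ hseq_le
    linarith
  by_cases h₀0 : h₀ = 0
  · subst h₀0
    have hQ0 : Tendsto (fun k => Q (h (φ k)) (h (φ k))) atTop (𝓝 0) := by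
      simpa using hQlim
    have hl : ∀ k, lmin - Q (h (φ k)) (h (φ k)) ≤ 1/((φ k:ℝ)+1) + 2*C*ρ (φ k)^γ := by
      intro k
      have h1 := hMcoer (h (φ k))
      rw [hnorm (φ k)] at h1
      have h2 := hB_le (φ k)
      rw [hJ''M] at h2
      simp only [one_pow, mul_one] at h1
      linarith
    have hcontr := le_of_tendsto_of_tendsto' (tendsto_const_nhds.sub hQ0) hβφ hl
    simp only [sub_zero] at hcontr
    linarith
  · have hpos := hSOC h₀ hcone h₀0
    rw [hJ''M] at hpos
    linarith

end
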